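/- In the group G = F_2^{n-1} ⋊_φ D_{2n}, the element ρ_1ρ_2 has order exactly n, where ρ_1 = (0,h_1) and ρ_2 = ((0,...,0,1)^T, h_0). -/

import Mathlib

open Matrix DihedralGroup

/-- The matrix `U` of Lemma 3: (0-indexed) row `i` has a 1 at column `n-3-i` for
`i ≤ n-3`, and the last row is all ones. -/
def Umat (n : ℕ) : Matrix (Fin (n-1)) (Fin (n-1)) (ZMod 2) :=
  Matrix.of fun i j =>
    if (i : ℕ) = n - 2 then 1 else if (i : ℕ) + (j : ℕ) = n - 3 then 1 else 0

/-- The anti-diagonal permutation matrix `V` of Lemma 3. -/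
def Vmat (n : ℕ) : Matrix (Fin (n-1)) (Fin (n-1)) (ZMod 2) :=
  Matrix.of fun i j => if (i : ℕ) + (j : ℕ) = n - 2 then 1 else 0

/-- u = (0,…,0,1)ᵀ ∈ F₂^{n-1}. -/
def uVec (n : ℕ) : Fin (n-1) → ZMod 2 := fun i => if (i : ℕ) = n - 2 then 1 else 0

/-- v = Vu = (1,0,…,0)ᵀ ∈ F₂^{n-1}. -/
def vVec (n : ℕ) : Fin (n-1) → ZMod 2 := fun i => if (i : ℕ) = 0 then 1 else 0

/-- Compatibility: in the older Mathlib `AddAut A` carried a multiplicative `Group` structure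
(composition); it is now an additive group, so the old structure is restored here. -/
instance addAutGroupOld (A : Type*) [Add A] : Group (AddAut A) where
  mul g h := AddEquiv.trans h g
  one := AddEquiv.refl _
  inv := AddEquiv.symm
  mul_assoc _ _ _ := rfl
  one_mul _ := rfl
  mul_one _ := rfl
  inv_mul_cancel := AddEquiv.self_trans_symm

@[simp]
theorem addAutGroupOld_mul_apply (A : Type*) [Add A] (e₁ e₂ : AddAut A) (m : A) :
    (e₁ * e₂) m = e₁ (e₂ m) :=
  rfl

@[simp]
theorem addAutGroupOld_one_apply (A : Type*) [Add A] (m : A) : (1 : AddAut A) m = m :=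
  rfl

/-- The action of `D_{2n}` on `F₂^{n-1}` (written multiplicatively) induced by a
representation `φ : D_{2n} → Aut(F₂^{n-1})`. -/
def dihAct (n : ℕ) (φ : DihedralGroup n →* AddAut (Fin (n-1) → ZMod 2)) :
    DihedralGroup n →* MulAut (Multiplicative (Fin (n-1) → ZMod 2)) where
  toFun x := AddEquiv.toMultiplicative (φ x)
  map_one' := by ext w; simp
  map_mul' x y := by ext w; simp

/-- The semidirect product `G = F₂^{n-1} ⋊_φ D_{2n}`. -/
abbrev Gsd (n : ℕ) (φ : DihedralGroup n →* AddAut (Fin (n-1) → ZMod 2)) :=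
  Multiplicative (Fin (n-1) → ZMod 2) ⋊[dihAct n φ] DihedralGroup n

/-- `ρ₀ = (0, h₀)`, where `h₀ = sr 0`. -/
def rho0 (n : ℕ) (φ : DihedralGroup n →* AddAut (Fin (n-1) → ZMod 2)) : Gsd n φ :=
  ⟨Multiplicative.ofAdd 0, sr 0⟩

/-- `ρ₁ = (0, h₁)`, where `h₁ = sr 1`. -/
def rho1 (n : ℕ) (φ : DihedralGroup n →* AddAut (Fin (n-1) → ZMod 2)) : Gsd n φ :=
  ⟨Multiplicative.ofAdd 0, sr 1⟩

/-- `ρ₂ = (u, h₀)`, where `u = (0,…,0,1)ᵀ`. -/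
def rho2 (n : ℕ) (φ : DihedralGroup n →* AddAut (Fin (n-1) → ZMod 2)) : Gsd n φ :=
  ⟨Multiplicative.ofAdd (uVec n), sr 0⟩


/-- standard basis vector, nat-indexed -/
def ebas (n k : ℕ) : Fin (n-1) → ZMod 2 := fun i => if (i : ℕ) = k then 1 else 0

lemma mulVec_ebas (n : ℕ) (A : Matrix (Fin (n-1)) (Fin (n-1)) (ZMod 2)) (j : Fin (n-1)) :
    A.mulVec (ebas n (j : ℕ)) = fun i => A i j := by
  funext i
  simp only [Matrix.mulVec, dotProduct, ebas]
  rw [Finset.sum_eq_single j]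
  · simp
  · intro k _ hk
    rw [if_neg (fun h => hk (Fin.ext h)), mul_zero]
  · intro h; exact absurd (Finset.mem_univ j) h

lemma Mstep (n : ℕ) (hn : 3 ≤ n) (j : Fin (n-1)) :
    (Vmat n).mulVec ((Umat n).mulVec (ebas n (j : ℕ)))
      = fun i : Fin (n-1) => if (i : ℕ) = 0 then (1 : ZMod 2) else if (i : ℕ) = (j : ℕ) + 1 then 1 else 0 := by
  rw [mulVec_ebas]
  funext i
  have hi : (i : ℕ) < n - 1 := i.isLt
  have hj : (j : ℕ) < n - 1 := j.isLt
  have hk : n - 2 - (i : ℕ) < n - 1 := by omega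
  simp only [Matrix.mulVec, dotProduct, Vmat, Umat, Matrix.of_apply]
  rw [Finset.sum_eq_single (⟨n - 2 - (i : ℕ), hk⟩ : Fin (n-1))]
  · rw [if_pos (by simp; omega), one_mul]
    simp only []
    split_ifs <;> first | rfl | omega
  · intro k _ hk2
    rw [if_neg, zero_mul]
    intro h
    exact hk2 (Fin.ext (by simp at h ⊢; omega))
  · intro h; exact absurd (Finset.mem_univ _) h

lemma dihAct_apply (n : ℕ) (φ : DihedralGroup n →* AddAut (Fin (n-1) → ZMod 2))
    (x : DihedralGroup n) (w : Fin (n-1) → ZMod 2) :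
    dihAct n φ x (Multiplicative.ofAdd w) = Multiplicative.ofAdd (φ x w) := rfl

lemma mk_mul (n : ℕ) (φ : DihedralGroup n →* AddAut (Fin (n-1) → ZMod 2))
    (a b : Multiplicative (Fin (n-1) → ZMod 2)) (x y : DihedralGroup n) :
    (⟨a, x⟩ : Gsd n φ) * ⟨b, y⟩ = ⟨a * dihAct n φ x b, x * y⟩ := rfl

/-- ρ1ρ2 has order exactly n. -/
theorem stmt_11 (n : ℕ) (hn : 3 ≤ n)
    (φ : DihedralGroup n →* AddAut (Fin (n-1) → ZMod 2))
    (hφ0 : ∀ w, φ (sr 0) w = (Umat n).mulVec w)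
    (hφ1 : ∀ w, φ (sr 1) w = (Vmat n).mulVec w) :
    orderOf (rho1 n φ * rho2 n φ) = n := by

  have hone : ¬ (n = 0) := by omega
  haveI : NeZero n := ⟨hone⟩
  set g := rho1 n φ * rho2 n φ with hgdef
  -- φ at r(-1)
  have hr : (r (-1) : DihedralGroup n) = sr 1 * sr 0 := by
    rw [sr_mul_sr, zero_sub]
  have hM : ∀ w, φ (r (-1)) w = (Vmat n).mulVec ((Umat n).mulVec w) := by
    intro w
    rw [hr, MonoidHom.map_mul, addAutGroupOld_mul_apply, hφ0, hφ1]
  -- description of g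
  have hu : uVec n = ebas n ((⟨n - 2, by omega⟩ : Fin (n-1)) : ℕ) := rfl
  have hVu : (Vmat n).mulVec (uVec n) = ebas n 0 := by
    rw [hu, mulVec_ebas]
    funext i
    have hi := i.isLt
    simp only [Vmat, Matrix.of_apply, ebas, Fin.val_mk]
    split_ifs <;> first | rfl | omega
  have hg : g = ⟨Multiplicative.ofAdd (ebas n 0), r (-1)⟩ := by
    rw [hgdef, rho1, rho2, mk_mul, dihAct_apply, hφ1, hVu, hr]
    congr 1
    rw [← ofAdd_add, zero_add]
  have key : ∀ k : ℕ, k + 1 ≤ n - 1 →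
      g ^ (k + 1) = ⟨Multiplicative.ofAdd (ebas n k), r (-((k : ZMod n) + 1))⟩ := by
    intro k
    induction k with
    | zero =>
      intro _
      rw [pow_one, hg]
      norm_num
    | succ k ih =>
      intro hk
      have hkn : k < n - 1 := by omega
      rw [pow_succ', ih (by omega), hg, mk_mul, dihAct_apply, hM]
      have : ebas n k = ebas n ((⟨k, hkn⟩ : Fin (n-1)) : ℕ) := rfl
      rw [this, Mstep n hn, r_mul_r]
      congr 1
      · rw [← ofAdd_add]
        congr 1
        funext i
        simp only [ebas, Pi.add_apply]
        split_ifs <;> first | omega | decide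
      · push_cast
        ring_nf
  have hgn : g ^ n = 1 := by
    have h1 : g ^ n = g * g ^ ((n - 2) + 1) := by
      rw [← pow_succ']
      congr 1
      omega
    rw [h1, key (n - 2) (by omega), hg, mk_mul, dihAct_apply, hM]
    have h2 : ebas n (n - 2) = ebas n ((⟨n - 2, by omega⟩ : Fin (n-1)) : ℕ) := rfl
    rw [h2, Mstep n hn, r_mul_r]
    have hl : Multiplicative.ofAdd (ebas n 0) * Multiplicative.ofAdd
        (fun i : Fin (n-1) => if (i : ℕ) = 0 then (1 : ZMod 2) else
          if (i : ℕ) = ((⟨n - 2, by omega⟩ : Fin (n-1)) : ℕ) + 1 then 1 else 0)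
        = Multiplicative.ofAdd (0 : Fin (n-1) → ZMod 2) := by
      rw [← ofAdd_add]
      congr 1
      funext i
      have : (i : ℕ) < n - 1 := i.isLt
      simp only [ebas, Pi.add_apply, Pi.zero_apply]
      split_ifs <;> first | omega | decide
    rw [hl]
    have hrr : (-1 + -((↑(n - 2) : ZMod n) + 1)) = (0 : ZMod n) := by
      have : ((n - 2 : ℕ) : ZMod n) = (n : ZMod n) - 2 := by
        have : (n : ℕ) - 2 + 2 = n := by omega
        rw [← this]
        push_cast
        ring
      rw [this, ZMod.natCast_self]
      ring
    rw [hrr]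
    rfl
  have hdvd1 : orderOf g ∣ n := orderOf_dvd_of_pow_eq_one hgn
  have hright : SemidirectProduct.rightHom g = r (-1) := by rw [hg]; rfl
  have hro : orderOf (r (-1) : DihedralGroup n) = n := by
    have h : (r (-1) : DihedralGroup n) = (r 1)⁻¹ :=
      eq_inv_of_mul_eq_one_left (by rw [r_mul_r, neg_add_cancel]; rfl)
    rw [h, orderOf_inv, orderOf_r_one]
  have hdvd2 : n ∣ orderOf g := by
    have h := orderOf_map_dvd (SemidirectProduct.rightHom) g
    rw [hright, hro] at h
    exact h
  exact Nat.dvd_antisymm hdvd1 hdvd2
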